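/- For mean-zero L² random variables Y, Z, U, W (with W possibly vector-valued), the omitted variable bias formula holds: the coefficient on Z in the regression of Y on (Z, W) minus the coefficient on Z in the regression of Y on (Z, W, U) equals [Cov(U^{⊥W}, Z^{⊥W}) / Var(Z^{⊥W})] · [Cov(Y^{⊥Z,W}, U^{⊥Z,W}) / Var(U^{⊥Z,W})]. -/

import Mathlib

open Submodule RealInnerProductSpace

/-- Residual of `A` after orthogonal projection onto the span of the finite set `S`
(population linear projection residual `A^{⊥S}`). -/
noncomputable def resid {H : Type*} [NormedAddCommGroup H] [InnerProductSpace ℝ H]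
    [CompleteSpace H] (A : H) (S : Set H) (hS : S.Finite) : H :=
  haveI := hS.to_subtype
  haveI : FiniteDimensional ℝ (span ℝ S) := FiniteDimensional.span_of_finite ℝ hS
  A - (orthogonalProjection (span ℝ S) A : H)


lemma inner_span_zero {H : Type*} [NormedAddCommGroup H] [InnerProductSpace ℝ H]
    (v : H) (S : Set H) (h : ∀ s ∈ S, ⟪v, s⟫ = 0) :
    ∀ x ∈ span ℝ S, ⟪v, x⟫ = 0 := by
  intro x hx
  induction hx using Submodule.span_induction with
  | mem s hs => exact h s hs
  | zero => simp
  | add a b _ _ ha hb => simp [inner_add_right, ha, hb]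
  | smul r a _ ha => simp [inner_smul_right, ha]

lemma resid_orth {H : Type*} [NormedAddCommGroup H] [InnerProductSpace ℝ H] [CompleteSpace H]
    (A : H) (S : Set H) (hS : S.Finite) :
    ∀ x ∈ span ℝ S, ⟪resid A S hS, x⟫ = 0 := by
  haveI := hS.to_subtype
  haveI : FiniteDimensional ℝ (span ℝ S) := FiniteDimensional.span_of_finite ℝ hS
  intro x hx
  rw [real_inner_comm]
  simpa [resid] using (sub_starProjection_mem_orthogonal (K := span ℝ S) A) x hx

lemma resid_sub_mem {H : Type*} [NormedAddCommGroup H] [InnerProductSpace ℝ H] [CompleteSpace H]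
    (A : H) (S : Set H) (hS : S.Finite) :
    A - resid A S hS ∈ span ℝ S := by
  haveI := hS.to_subtype
  haveI : FiniteDimensional ℝ (span ℝ S) := FiniteDimensional.span_of_finite ℝ hS
  simp only [resid, sub_sub_cancel]
  exact coe_mem _
/-- Omitted variable bias formula (Lemma A.2 underpinning): the coefficient on `Z` in the
regression of `Y` on `(Z, W)` minus the coefficient on `Z` in the regression of `Y`
on `(Z, W, U)` equals
`[Cov(U^{⊥W}, Z^{⊥W}) / Var(Z^{⊥W})] · [Cov(Y^{⊥Z,W}, U^{⊥Z,W}) / Var(U^{⊥Z,W})]`.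
Here `W` may be vector-valued (a finite family), random variables are vectors in a real
Hilbert space (inner product = covariance), and regression coefficients are characterized
by the normal equations, with regressors linearly independent. -/
theorem stmt_7 {H : Type*} [NormedAddCommGroup H] [InnerProductSpace ℝ H] [CompleteSpace H]
    {k : ℕ} (Y Z U : H) (W : Fin k → H)
    (hli : LinearIndependent ℝ (Fin.cons Z (Fin.cons U W) : Fin (k + 2) → H))
    (hvZ : 0 < ⟪resid Z (Set.range W) (Set.finite_range W),
                resid Z (Set.range W) (Set.finite_range W)⟫)
    (hvU : 0 < ⟪resid U (insert Z (Set.range W)) ((Set.finite_range W).insert Z),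
                resid U (insert Z (Set.range W)) ((Set.finite_range W).insert Z)⟫) :
    ∀ (bs bl : ℝ) (cs cl : Fin k → ℝ) (dl : ℝ),
      (⟪Y - (bs • Z + ∑ i, cs i • W i), Z⟫ = 0) →
      (∀ j, ⟪Y - (bs • Z + ∑ i, cs i • W i), W j⟫ = 0) →
      (⟪Y - (bl • Z + dl • U + ∑ i, cl i • W i), Z⟫ = 0) →
      (⟪Y - (bl • Z + dl • U + ∑ i, cl i • W i), U⟫ = 0) →
      (∀ j, ⟪Y - (bl • Z + dl • U + ∑ i, cl i • W i), W j⟫ = 0) →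
      bs - bl =
        (⟪resid U (Set.range W) (Set.finite_range W),
          resid Z (Set.range W) (Set.finite_range W)⟫ /
         ⟪resid Z (Set.range W) (Set.finite_range W),
          resid Z (Set.range W) (Set.finite_range W)⟫) *
        (⟪resid Y (insert Z (Set.range W)) ((Set.finite_range W).insert Z),
          resid U (insert Z (Set.range W)) ((Set.finite_range W).insert Z)⟫ /
         ⟪resid U (insert Z (Set.range W)) ((Set.finite_range W).insert Z),
          resid U (insert Z (Set.range W)) ((Set.finite_range W).insert Z)⟫) := by

  intro bs bl cs cl dl hsZ hsW hlZ hlU hlW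
  set Zp := resid Z (Set.range W) (Set.finite_range W) with hZpdef
  set Up := resid U (Set.range W) (Set.finite_range W) with hUpdef
  set Yp := resid Y (insert Z (Set.range W)) ((Set.finite_range W).insert Z) with hYpdef
  set Uq := resid U (insert Z (Set.range W)) ((Set.finite_range W).insert Z) with hUqdef
  have hle : span ℝ (Set.range W) ≤ span ℝ (insert Z (Set.range W)) :=
    span_mono (Set.subset_insert _ _)
  have hZp_orth : ∀ x ∈ span ℝ (Set.range W), ⟪Zp, x⟫ = 0 :=
    resid_orth Z (Set.range W) (Set.finite_range W)
  have hUq_orth : ∀ x ∈ span ℝ (insert Z (Set.range W)), ⟪Uq, x⟫ = 0 :=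
    resid_orth U (insert Z (Set.range W)) ((Set.finite_range W).insert Z)
  have hZsub : Z - Zp ∈ span ℝ (Set.range W) := resid_sub_mem _ _ _
  have hUsub : U - Up ∈ span ℝ (Set.range W) := resid_sub_mem _ _ _
  have hYsub2 : Y - Yp ∈ span ℝ (insert Z (Set.range W)) := resid_sub_mem _ _ _
  have hUsub2 : U - Uq ∈ span ℝ (insert Z (Set.range W)) := resid_sub_mem _ _ _
  have hZmem : Z ∈ span ℝ (insert Z (Set.range W)) := subset_span (Set.mem_insert _ _)
  have hZpmem : Zp ∈ span ℝ (insert Z (Set.range W)) := by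
    rw [show Zp = Z - (Z - Zp) by abel]
    exact sub_mem hZmem (hle hZsub)
  -- residuals orthogonal to everything relevant
  have hWZp : ∀ j, ⟪W j, Zp⟫ = 0 := fun j => by
    rw [real_inner_comm]; exact hZp_orth (W j) (subset_span ⟨j, rfl⟩)
  have hZZp : ⟪Z, Zp⟫ = ⟪Zp, Zp⟫ := by
    have h := hZp_orth (Z - Zp) hZsub
    rw [inner_sub_right, sub_eq_zero] at h
    rw [real_inner_comm]; exact h
  have hUZp : ⟪U, Zp⟫ = ⟪Up, Zp⟫ := by
    have h := hZp_orth (U - Up) hUsub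
    rw [inner_sub_right, sub_eq_zero] at h
    calc ⟪U, Zp⟫ = ⟪Zp, U⟫ := real_inner_comm _ _
      _ = ⟪Zp, Up⟫ := h
      _ = ⟪Up, Zp⟫ := real_inner_comm _ _
  have hZUq : ⟪Z, Uq⟫ = 0 := by
    rw [real_inner_comm]; exact hUq_orth Z hZmem
  have hWUq : ∀ j, ⟪W j, Uq⟫ = 0 := fun j => by
    rw [real_inner_comm]
    exact hUq_orth (W j) (subset_span (Set.mem_insert_of_mem _ ⟨j, rfl⟩))
  have hUUq : ⟪U, Uq⟫ = ⟪Uq, Uq⟫ := by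
    have h := hUq_orth (U - Uq) hUsub2
    rw [inner_sub_right, sub_eq_zero] at h
    calc ⟪U, Uq⟫ = ⟪Uq, U⟫ := real_inner_comm _ _
      _ = ⟪Uq, Uq⟫ := h
  have hYUq : ⟪Y, Uq⟫ = ⟪Yp, Uq⟫ := by
    have h := hUq_orth (Y - Yp) hYsub2
    rw [inner_sub_right, sub_eq_zero] at h
    calc ⟪Y, Uq⟫ = ⟪Uq, Y⟫ := real_inner_comm _ _
      _ = ⟪Uq, Yp⟫ := h
      _ = ⟪Yp, Uq⟫ := real_inner_comm _ _
  -- regression errors orthogonal to span of (Z, W)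
  have hes : ∀ x ∈ span ℝ (insert Z (Set.range W)),
      ⟪Y - (bs • Z + ∑ i, cs i • W i), x⟫ = 0 := by
    apply inner_span_zero
    rintro s (rfl | ⟨j, rfl⟩)
    · exact hsZ
    · exact hsW j
  have hel : ∀ x ∈ span ℝ (insert Z (Set.range W)),
      ⟪Y - (bl • Z + dl • U + ∑ i, cl i • W i), x⟫ = 0 := by
    apply inner_span_zero
    rintro s (rfl | ⟨j, rfl⟩)
    · exact hlZ
    · exact hlW j
  -- key equations
  have e1 : ⟪Y, Zp⟫ = bs * ⟪Zp, Zp⟫ := by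
    have h := hes Zp hZpmem
    simp only [inner_sub_left, inner_add_left, real_inner_smul_left, sum_inner,
      sub_eq_zero] at h
    rw [h]
    simp [hWZp, hZZp]
  have e2 : ⟪Y, Zp⟫ = bl * ⟪Zp, Zp⟫ + dl * ⟪Up, Zp⟫ := by
    have h := hel Zp hZpmem
    simp only [inner_sub_left, inner_add_left, real_inner_smul_left, sum_inner,
      sub_eq_zero] at h
    rw [h]
    simp [hWZp, hZZp, hUZp]
  have e3 : ⟪Yp, Uq⟫ = dl * ⟪Uq, Uq⟫ := by
    have h : ⟪Y - (bl • Z + dl • U + ∑ i, cl i • W i), Uq⟫ = 0 := by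
      have h1 := hel (U - Uq) hUsub2
      rw [inner_sub_right] at h1
      linarith [hlU]
    simp only [inner_sub_left, inner_add_left, real_inner_smul_left, sum_inner,
      sub_eq_zero] at h
    rw [← hYUq, h]
    simp [hWUq, hZUq, hUUq]
  have hZ0 : ⟪Zp, Zp⟫ ≠ 0 := ne_of_gt hvZ
  have hU0 : ⟪Uq, Uq⟫ ≠ 0 := ne_of_gt hvU
  rw [e3, mul_div_assoc, div_self hU0, mul_one]
  field_simp
  linarith [e1, e2]
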